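/- arXiv:2002.01070 — 7 statements merged into one kernel-verified Lean document; each statement's English description precedes it below -/
import Mathlib

section
/- For any permutation π with symmetric distances, L(π) = W(π_1, π_n, π_{n−1}, …, π_2) − Σ_{i=1}^{n-1} d(π_i, π_{i+1}) − d(π_1, π_n), where the second permutation is π shifted to start at π_1 and then reversed. -/
open Finset

/-- Weighted TSP cost of the tour `π 0, π 1, …, π (n-1)` with node weights `w`. -/
noncomputable def wCost (n : ℕ) (d : Fin n → Fin n → ℝ) (w : Fin n → ℝ) (π : ℕ → Fin n) : ℝ :=
  d (π (n - 1)) (π 0) * (∑ j ∈ Finset.range n, w (π j)) +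
    ∑ i ∈ Finset.range (n - 1), d (π i) (π (i + 1)) * (∑ j ∈ Finset.range (i + 1), w (π j))

/-- 1-weighted TSP cost (all node weights equal to 1). -/
noncomputable def w1Cost (n : ℕ) (d : Fin n → Fin n → ℝ) (π : ℕ → Fin n) : ℝ :=
  (n : ℝ) * d (π (n - 1)) (π 0) +
    ∑ i ∈ Finset.range (n - 1), ((i : ℝ) + 1) * d (π i) (π (i + 1))

/-- Latency of the tour `π`. -/
noncomputable def latency (n : ℕ) (d : Fin n → Fin n → ℝ) (π : ℕ → Fin n) : ℝ :=
  ∑ i ∈ Finset.range (n - 1), ((n - (i + 1) : ℕ) : ℝ) * d (π i) (π (i + 1))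

/-- `π` visits each of the `n` cities exactly once. -/
def IsTour (n : ℕ) (π : ℕ → Fin n) : Prop :=
  Function.Bijective fun i : Fin n => π i.val

/-- Classical TSP tour length. -/
noncomputable def tspCost (n : ℕ) (d : Fin n → Fin n → ℝ) (π : ℕ → Fin n) : ℝ :=
  d (π (n - 1)) (π 0) + ∑ i ∈ Finset.range (n - 1), d (π i) (π (i + 1))

/-- Distance of the edge at (0-indexed) position `i` of the tour, position `n-1` being the closing edge. -/
noncomputable def edgeDist (n : ℕ) (d : Fin n → Fin n → ℝ) (π : ℕ → Fin n) (i : ℕ) : ℝ :=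
  if i = n - 1 then d (π (n - 1)) (π 0) else d (π i) (π (i + 1))

open Classical in
/-- Number of edges of distance 2 in the tour `π`. -/
noncomputable def numTwoEdges (n : ℕ) (d : Fin n → Fin n → ℝ) (π : ℕ → Fin n) : ℕ :=
  ((Finset.range n).filter fun i => edgeDist n d π i = 2).card

/-- `L(π) = W(π_1, π_n, …, π_2) − Σ_{i=1}^{n-1} d(π_i,π_{i+1}) − d(π_1,π_n)`
for symmetric distances, where the second permutation starts at π_1 and then visits the
remaining cities of π in reverse order. -/
theorem stmt2 (n : ℕ) (hn : 2 ≤ n) (d : Fin n → Fin n → ℝ)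
    (hsym : ∀ i j, d i j = d j i)
    (π : ℕ → Fin n) (hπ : IsTour n π)
    (σ : ℕ → Fin n) (hσ : ∀ j, σ j = if j = 0 then π 0 else π (n - j)) :
    latency n d π =
      w1Cost n d σ - (∑ i ∈ Finset.range (n - 1), d (π i) (π (i + 1)))
        - d (π 0) (π (n - 1)) := by
  obtain ⟨m, rfl⟩ : ∃ m, n = m + 2 := ⟨n - 2, by omega⟩
  have hσ0 : σ 0 = π 0 := by rw [hσ]; simp
  have hσs : ∀ j, σ (j + 1) = π (m + 1 - j) := by
    intro j
    rw [hσ, if_neg (Nat.succ_ne_zero j)]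
    congr 1
    omega
  unfold latency w1Cost
  have e1 : m + 2 - 1 = m + 1 := rfl
  rw [e1]
  rw [Finset.sum_range_succ' (fun i => ((m + 2 - (i + 1) : ℕ) : ℝ) * d (π i) (π (i + 1))) m]
  rw [Finset.sum_range_succ' (fun i => ((i : ℝ) + 1) * d (σ i) (σ (i + 1))) m]
  rw [Finset.sum_range_succ' (fun i => d (π i) (π (i + 1))) m]
  have hσm : σ (m + 1) = π 1 := by rw [hσs]; congr 1; omega
  have hσ1 : σ (0 + 1) = π (m + 1) := by rw [hσs]; congr 1
  have hw : (∑ i ∈ Finset.range m, ((↑(i + 1) : ℝ) + 1) * d (σ (i + 1)) (σ (i + 1 + 1)))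
      = ∑ i ∈ Finset.range m, ((m + 1 - i : ℕ) : ℝ) * d (π (i + 1)) (π (i + 1 + 1)) := by
    rw [← Finset.sum_range_reflect
      (fun i => ((m + 1 - i : ℕ) : ℝ) * d (π (i + 1)) (π (i + 1 + 1))) m]
    apply Finset.sum_congr rfl
    intro i hi
    simp only [Finset.mem_range] at hi
    have h1 : m - 1 - i + 1 = m - i := by omega
    rw [h1, hσs i, hσs (i + 1)]
    have h3 : m + 1 - (m - 1 - i) = i + 2 := by omega
    have h4 : m + 1 - i = m - i + 1 := by omega
    have h5 : m + 1 - (i + 1) = m - i := by omega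
    rw [h3, h4, h5, hsym]
    push_cast
    ring
  rw [hσ0, hσm, hσ1, hw]
  have hlat : (∑ i ∈ Finset.range m, ((m + 2 - (i + 1 + 1) : ℕ) : ℝ) * d (π (i + 1)) (π (i + 1 + 1)))
      = (∑ i ∈ Finset.range m, ((m + 1 - i : ℕ) : ℝ) * d (π (i + 1)) (π (i + 1 + 1)))
        - ∑ i ∈ Finset.range m, d (π (i + 1)) (π (i + 1 + 1)) := by
    rw [← Finset.sum_sub_distrib]
    apply Finset.sum_congr rfl
    intro i hi
    simp only [Finset.mem_range] at hi
    have h1 : m + 2 - (i + 1 + 1) = m - i := by omega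
    have h2 : m + 1 - i = m - i + 1 := by omega
    rw [h1, h2]
    push_cast
    ring
  rw [hlat]
  have h0 : ((m + 2 - (0 + 1) : ℕ) : ℝ) = (m : ℝ) + 1 := by
    have : m + 2 - (0 + 1) = m + 1 := by omega
    rw [this]; push_cast; ring
  rw [h0, hsym (π 1) (π 0)]
  push_cast
  ring
end

section
/- Let π be a tour and π' = (π_1, π_n, …, π_2) its reversal (starting at the same city). For {1,2}-distances, each edge that contributes position weight r ∈ {1,…,n} in π contributes position weight n−r+1 in π'. Consequently, W(π) + W(π') = n(n+1) + k(n+1) whenever π has exactly k edges of distance 2, where n(n+1) accounts for the base 1-distance contributions of both tours. -/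
open Finset

/-- for symmetric {1,2}-distances, an edge at (0-indexed) position i of π
(position weight i+1) appears at position n−1−i of the reversal π' = (π_1, π_n, …, π_2)
(position weight n−i, i.e. n−r+1 for r = i+1); consequently, if π has exactly k edges of
distance 2, then W(π) + W(π') = n(n+1) + k(n+1). -/
theorem stmt8 (n : ℕ) (hn : 2 ≤ n) (d : Fin n → Fin n → ℝ)
    (hsym : ∀ i j, d i j = d j i)
    (h12 : ∀ i j, d i j = 1 ∨ d i j = 2)
    (π : ℕ → Fin n) (hπ : IsTour n π)
    (π' : ℕ → Fin n) (hπ' : ∀ j, π' j = if j = 0 then π 0 else π (n - j))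
    (k : ℕ) (hk : k = numTwoEdges n d π) :
    (∀ i ∈ Finset.range n, edgeDist n d π' (n - 1 - i) = edgeDist n d π i) ∧
    w1Cost n d π + w1Cost n d π' = (n : ℝ) * (n + 1) + (k : ℝ) * (n + 1) := by
  classical
  have hrev : ∀ i ∈ Finset.range n, edgeDist n d π' (n - 1 - i) = edgeDist n d π i := by
    intro i hi
    rw [Finset.mem_range] at hi
    unfold edgeDist
    by_cases hi1 : i = n - 1
    · subst hi1
      rw [Nat.sub_self, if_neg (by omega : (0 : ℕ) ≠ n - 1), if_pos rfl,
        hπ' 0, hπ' 1, if_pos rfl, if_neg one_ne_zero]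
      exact hsym _ _
    · have hi2 : i < n - 1 := by omega
      rw [if_neg hi1]
      by_cases h0 : i = 0
      · subst h0
        rw [Nat.sub_zero, if_pos rfl, hπ' (n - 1), hπ' 0, if_neg (by omega), if_pos rfl]
        have h1 : n - (n - 1) = 1 := by omega
        rw [h1]
        exact hsym _ _
      · rw [if_neg (by omega), hπ' (n - 1 - i), hπ' (n - 1 - i + 1),
          if_neg (by omega), if_neg (by omega)]
        have h1 : n - (n - 1 - i) = i + 1 := by omega
        have h2 : n - (n - 1 - i + 1) = i := by omega
        rw [h1, h2]
        exact hsym _ _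
  refine ⟨hrev, ?_⟩
  have hW : ∀ σ : ℕ → Fin n,
      w1Cost n d σ = ∑ i ∈ Finset.range n, ((i : ℝ) + 1) * edgeDist n d σ i := by
    intro σ
    obtain ⟨m, rfl⟩ : ∃ m, n = m + 1 := ⟨n - 1, by omega⟩
    rw [Finset.sum_range_succ, Finset.sum_congr rfl (fun i hi => by
      simp only [edgeDist, Nat.add_sub_cancel]
      rw [if_neg (Finset.mem_range.mp hi).ne])]
    simp only [w1Cost, edgeDist, Nat.add_sub_cancel, if_pos rfl]
    push_cast
    ring
  have hW' : w1Cost n d π' = ∑ i ∈ Finset.range n, ((n : ℝ) - i) * edgeDist n d π i := by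
    rw [hW π', ← Finset.sum_range_reflect]
    refine Finset.sum_congr rfl fun i hi => ?_
    rw [hrev i hi]
    have hi' : i < n := Finset.mem_range.mp hi
    congr 1
    have : n - 1 - i = n - (1 + i) := by omega
    rw [this, Nat.cast_sub (by omega : 1 + i ≤ n)]
    push_cast
    ring
  have hkn : k ≤ n := by
    rw [hk, numTwoEdges]
    exact (Finset.card_filter_le _ _).trans_eq (Finset.card_range n)
  have hsum : ∑ i ∈ Finset.range n, edgeDist n d π i = (n : ℝ) + k := by
    rw [← Finset.sum_filter_add_sum_filter_not (Finset.range n)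
      (fun i => edgeDist n d π i = 2)]
    have h1 : ∑ i ∈ (Finset.range n).filter (fun i => edgeDist n d π i = 2),
        edgeDist n d π i = 2 * k := by
      rw [Finset.sum_congr rfl (fun i hi => (Finset.mem_filter.mp hi).2),
        Finset.sum_const, hk, numTwoEdges]
      simp [mul_comm]
    have hcard : ((Finset.range n).filter (fun i => ¬ edgeDist n d π i = 2)).card = n - k := by
      have := Finset.card_filter_add_card_filter_not
        (s := Finset.range n) (p := fun i => edgeDist n d π i = 2)
      rw [Finset.card_range] at this
      rw [hk, numTwoEdges]
      omega
    have h2 : ∑ i ∈ (Finset.range n).filter (fun i => ¬ edgeDist n d π i = 2),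
        edgeDist n d π i = ((n - k : ℕ) : ℝ) := by
      have hone : ∀ i ∈ (Finset.range n).filter (fun i => ¬ edgeDist n d π i = 2),
          edgeDist n d π i = (1 : ℝ) := by
        intro i hi
        have h12' : edgeDist n d π i = 1 ∨ edgeDist n d π i = 2 := by
          unfold edgeDist; split <;> exact h12 _ _
        have := (Finset.mem_filter.mp hi).2
        tauto
      rw [Finset.sum_congr rfl hone, Finset.sum_const, hcard]
      simp
    rw [h1, h2, Nat.cast_sub hkn]
    ring
  have : w1Cost n d π + w1Cost n d π' =
      ∑ i ∈ Finset.range n, ((n : ℝ) + 1) * edgeDist n d π i := by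
    rw [hW π, hW', ← Finset.sum_add_distrib]
    exact Finset.sum_congr rfl fun i _ => by ring
  rw [this, ← Finset.mul_sum, hsum]
  ring
end

section
/- For {1,2}-distances, if the optimal (classical) TSP tour has exactly u edges of distance 2, then every 1-weighted TSP tour has cost at least n(n+1)/2 + u(u+1)/2. -/
open Finset

lemma sum_succ_lb (S : Finset ℕ) : S.card * (S.card + 1) ≤ 2 * ∑ i ∈ S, (i + 1) := by
  induction S using Finset.induction_on_max with
  | empty => simp
  | insert a s ha ih =>
    have hnm : a ∉ s := fun h => lt_irrefl a (ha a h)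
    have hs : s.card ≤ a := by
      have : s ⊆ Finset.range a := fun x hx => Finset.mem_range.2 (ha x hx)
      simpa using Finset.card_le_card this
    rw [Finset.sum_insert hnm, Finset.card_insert_of_notMem hnm]
    nlinarith

lemma gauss_lem (n : ℕ) : ∑ i ∈ Finset.range n, ((i : ℝ) + 1) = n * (n + 1) / 2 := by
  induction n with
  | zero => simp
  | succ k ih => rw [Finset.sum_range_succ, ih]; push_cast; ring

/-- for symmetric {1,2}-distances, if the optimal classical TSP tour has
exactly u edges of distance 2 (so every tour has at least u such edges), then every
1-weighted TSP tour has cost at least n(n+1)/2 + u(u+1)/2. -/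
theorem stmt10 (n : ℕ) (hn : 1 ≤ n) (d : Fin n → Fin n → ℝ)
    (hsym : ∀ i j, d i j = d j i)
    (h12 : ∀ i j, d i j = 1 ∨ d i j = 2)
    (u : ℕ)
    (hopt : ∃ π : ℕ → Fin n, IsTour n π ∧ numTwoEdges n d π = u)
    (hmin : ∀ π : ℕ → Fin n, IsTour n π → u ≤ numTwoEdges n d π) :
    ∀ σ : ℕ → Fin n, IsTour n σ →
      (n : ℝ) * (n + 1) / 2 + (u : ℝ) * (u + 1) / 2 ≤ w1Cost n d σ := by
  classical
  intro σ hσ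
  set S := (Finset.range n).filter fun i => edgeDist n d σ i = 2 with hSdef
  have hcard : u ≤ S.card := hmin σ hσ
  -- rewrite w1Cost as a uniform sum over positions
  have key : w1Cost n d σ = ∑ i ∈ Finset.range n, ((i : ℝ) + 1) * edgeDist n d σ i := by
    obtain ⟨m, rfl⟩ : ∃ m, n = m + 1 := ⟨n - 1, (Nat.succ_pred_eq_of_pos hn).symm⟩
    rw [Finset.sum_range_succ]
    have h1 : ∀ i ∈ Finset.range m,
        ((i : ℝ) + 1) * edgeDist (m + 1) d σ i = ((i : ℝ) + 1) * d (σ i) (σ (i + 1)) := by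
      intro i hi
      have : i ≠ m + 1 - 1 := by simp at hi; omega
      rw [edgeDist, if_neg this]
    rw [Finset.sum_congr rfl h1]
    have h2 : edgeDist (m + 1) d σ m = d (σ (m + 1 - 1)) (σ 0) := by
      rw [edgeDist, if_pos]; omega
    rw [h2]
    simp only [w1Cost, Nat.add_sub_cancel]
    push_cast
    ring
  -- edge distances are 1 or 2
  have hedge : ∀ i, edgeDist n d σ i = 1 ∨ edgeDist n d σ i = 2 := by
    intro i
    unfold edgeDist
    split <;> apply h12
  have hsplit : w1Cost n d σ
      = (∑ i ∈ Finset.range n, ((i : ℝ) + 1)) + ∑ i ∈ S, ((i : ℝ) + 1) := by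
    rw [key, hSdef, Finset.sum_filter, ← Finset.sum_add_distrib]
    apply Finset.sum_congr rfl
    intro i _
    by_cases h : edgeDist n d σ i = 2
    · rw [h]; norm_num; ring
    · have h1 : edgeDist n d σ i = 1 := (hedge i).resolve_right h
      rw [h1]; norm_num
  have hSsum : (u : ℝ) * (u + 1) / 2 ≤ ∑ i ∈ S, ((i : ℝ) + 1) := by
    have h1 := sum_succ_lb S
    have h2 : ((∑ i ∈ S, (i + 1) : ℕ) : ℝ) = ∑ i ∈ S, ((i : ℝ) + 1) := by push_cast; ring
    have h3 : (S.card * (S.card + 1) : ℝ) ≤ 2 * ∑ i ∈ S, ((i : ℝ) + 1) := by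
      rw [← h2]; exact_mod_cast h1
    have h4 : (u : ℝ) ≤ S.card := by exact_mod_cast hcard
    nlinarith
  rw [hsplit, gauss_lem]
  linarith
end

section
/- For all real n > 0, u with 0 ≤ u ≤ n, and c ≥ 0, the ratio (n(n+1) + (cn + (1+c)u)(n+1)) / (n(n+1) + u(u+1)) is at most 1 + c + (1+c)/2 = 1.5(1+c). -/
/-- for reals n > 0, 0 ≤ u ≤ n, c ≥ 0,
(n(n+1) + (cn + (1+c)u)(n+1)) / (n(n+1) + u(u+1)) ≤ 1 + c + (1+c)/2 = 1.5(1+c). -/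
theorem stmt11 (n u c : ℝ) (hn : 0 < n) (hu0 : 0 ≤ u) (hun : u ≤ n) (hc : 0 ≤ c) :
    (n * (n + 1) + (c * n + (1 + c) * u) * (n + 1)) / (n * (n + 1) + u * (u + 1)) ≤
      1 + c + (1 + c) / 2 ∧
    (1 : ℝ) + c + (1 + c) / 2 = 1.5 * (1 + c) := by
  constructor
  · have hd : 0 < n * (n + 1) + u * (u + 1) := by nlinarith
    rw [div_le_iff₀ hd]
    nlinarith [mul_nonneg hc (sq_nonneg (n - u)), sq_nonneg (n - u), mul_pos hn hn,
      mul_nonneg hu0 (sub_nonneg.2 hun), mul_nonneg hc (mul_nonneg hu0 (sub_nonneg.2 hun))]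
  · ring
end

section
/- In the expanded instance (copies of cities with zero intra-city distances), any permutation of the original instance, when each city i is replaced by its w(i) consecutive copies, has 1-weighted TSP cost (all copies weight 1) equal to the weighted TSP cost W of the original permutation with weights w. -/
/-- Weighted TSP cost of a tour given as a list (with default element `a`, unused
since all accessed indices are in range). -/
noncomputable def wCostList {α : Type*} (d : α → α → ℝ) (wt : α → ℝ) (a : α)
    (L : List α) : ℝ :=
  d (L.getD (L.length - 1) a) (L.getD 0 a) *
      (∑ j ∈ Finset.range L.length, wt (L.getD j a)) +
    ∑ i ∈ Finset.range (L.length - 1),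
      d (L.getD i a) (L.getD (i + 1) a) *
        (∑ j ∈ Finset.range (i + 1), wt (L.getD j a))




noncomputable def pathS {α : Type*} (dd : α → α → ℝ) (wt : α → ℝ) : List α → ℝ → ℝ
  | [], _ => 0
  | [_], _ => 0
  | x :: y :: rest, c => dd x y * (c + wt x) + pathS dd wt (y :: rest) (c + wt x)

theorem sumIdx {α : Type*} (dd : α → α → ℝ) (wt : α → ℝ) (a : α) :
    ∀ (L : List α) (c : ℝ),
      (∑ i ∈ Finset.range (L.length - 1),
        dd (L.getD i a) (L.getD (i+1) a) * (c + ∑ j ∈ Finset.range (i+1), wt (L.getD j a)))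
      = pathS dd wt L c
  | [], c => by simp [pathS]
  | [x], c => by simp [pathS]
  | x :: y :: rest, c => by
    have ih := sumIdx dd wt a (y :: rest) (c + wt x)
    rw [pathS, ← ih]
    simp only [List.length_cons, Nat.add_sub_cancel]
    rw [Finset.sum_range_succ', add_comm]
    simp only [List.getD_cons_succ, List.getD_cons_zero]
    congr 1
    · simp
    · apply Finset.sum_congr rfl
      intro i _
      congr 1
      rw [Finset.sum_range_succ']
      simp only [List.getD_cons_succ, List.getD_cons_zero]
      ring

theorem sumWt {α : Type*} (wt : α → ℝ) (a : α) :
    ∀ L : List α, ∑ j ∈ Finset.range L.length, wt (L.getD j a) = (L.map wt).sum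
  | [] => by simp
  | x :: t => by
    rw [List.length_cons, Finset.sum_range_succ']
    simp only [List.getD_cons_succ, List.getD_cons_zero, List.map_cons, List.sum_cons]
    rw [sumWt wt a t]; ring

theorem pathS_rep_nil {α : Type*} [DecidableEq α] (d : α → α → ℝ) (x : α) :
    ∀ (n : ℕ) (c : ℝ),
      pathS (fun i j => if i = j then (0 : ℝ) else d i j) (fun _ => (1 : ℝ))
        (List.replicate n x) c = 0
  | 0, c => by simp [pathS]
  | 1, c => by simp [List.replicate, pathS]
  | (n+2), c => by
    show pathS _ _ (x :: x :: List.replicate n x) c = 0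
    rw [pathS]
    have := pathS_rep_nil d x (n+1) (c+1)
    simp only [List.replicate] at this ⊢
    rw [this]
    simp

theorem pathS_rep {α : Type*} [DecidableEq α] (d : α → α → ℝ) (x z : α) (M : List α) :
    ∀ (n : ℕ) (c : ℝ),
      pathS (fun i j => if i = j then (0 : ℝ) else d i j) (fun _ => (1 : ℝ))
        (List.replicate (n+1) x ++ (z :: M)) c
      = (if x = z then (0:ℝ) else d x z) * (c + (n+1)) +
        pathS (fun i j => if i = j then (0 : ℝ) else d i j) (fun _ => (1 : ℝ))
          (z :: M) (c + (n+1))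
  | 0, c => by
    show pathS _ _ (x :: z :: M) c = _
    rw [pathS]
    norm_num
  | (n+1), c => by
    show pathS _ _ (x :: (List.replicate (n+1) x ++ (z :: M))) c = _
    have hcons : List.replicate (n+1) x ++ (z :: M)
        = x :: (List.replicate n x ++ (z :: M)) := by simp [List.replicate]
    rw [hcons, pathS, ← hcons, pathS_rep d x z M n (c+1)]
    have h0 : (if x = x then (0:ℝ) else d x x) = 0 := if_pos rfl
    rw [h0]
    push_cast
    ring_nf

theorem pathS_expand {α : Type*} [DecidableEq α] (d : α → α → ℝ) (w : α → ℕ)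
    (hw : ∀ i, 1 ≤ w i) :
    ∀ (L : List α), L.Nodup → ∀ c : ℝ,
      pathS (fun i j => if i = j then (0 : ℝ) else d i j) (fun _ => (1 : ℝ))
        (L.flatMap fun i => List.replicate (w i) i) c
      = pathS d (fun i => (w i : ℝ)) L c
  | [], _, c => by simp [pathS]
  | [x], _, c => by
    simp only [List.flatMap_cons, List.flatMap_nil, List.append_nil]
    rw [show pathS d (fun i => (w i : ℝ)) [x] c = 0 from rfl]
    exact pathS_rep_nil d x (w x) c
  | x :: y :: rest, hnd, c => by
    have hxy : x ≠ y := by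
      intro h; subst h
      exact (List.nodup_cons.mp hnd).1 List.mem_cons_self
    have ih := pathS_expand d w hw (y :: rest) (List.nodup_cons.mp hnd).2 (c + (w x : ℝ))
    obtain ⟨mx, hmx⟩ : ∃ m, w x = m + 1 := ⟨w x - 1, (Nat.succ_pred_eq_of_pos (hw x)).symm⟩
    obtain ⟨my, hmy⟩ : ∃ m, w y = m + 1 := ⟨w y - 1, (Nat.succ_pred_eq_of_pos (hw y)).symm⟩
    have hyrest : (y :: rest).flatMap (fun i => List.replicate (w i) i)
        = y :: (List.replicate my y ++ rest.flatMap (fun i => List.replicate (w i) i)) := by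
      rw [List.flatMap_cons, hmy, List.replicate_succ, List.cons_append]
    have hexp : (x :: y :: rest).flatMap (fun i => List.replicate (w i) i)
        = List.replicate (mx+1) x
          ++ (y :: (List.replicate my y ++ rest.flatMap (fun i => List.replicate (w i) i))) := by
      rw [List.flatMap_cons, hmx, ← hyrest]
    have hcast : ((mx : ℝ) + 1) = (w x : ℝ) := by rw [hmx]; push_cast; ring
    rw [hexp, pathS_rep, hcast, ← hyrest, ih, pathS, if_neg hxy]

theorem sumIdx0 {α : Type*} (dd : α → α → ℝ) (wt : α → ℝ) (a : α) (L : List α) :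
    (∑ i ∈ Finset.range (L.length - 1),
      dd (L.getD i a) (L.getD (i+1) a) * (∑ j ∈ Finset.range (i+1), wt (L.getD j a)))
    = pathS dd wt L 0 := by
  rw [← sumIdx dd wt a L 0]
  exact Finset.sum_congr rfl (fun i _ => by rw [zero_add])

theorem getLast?_expand {α : Type*} (w : α → ℕ) (hw : ∀ i, 1 ≤ w i) :
    ∀ L : List α, (L.flatMap fun i => List.replicate (w i) i).getLast? = L.getLast?
  | [] => by simp
  | x :: t => by
    rw [List.flatMap_cons, List.getLast?_append, getLast?_expand w hw t,
      List.getLast?_replicate, if_neg (by have := hw x; omega : ¬ w x = 0),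
      show x :: t = [x] ++ t from rfl, List.getLast?_append]
    rfl

/-- replacing each city i of a tour of the original weighted instance by
its w(i) consecutive copies in the expanded instance (zero intra-city distances, unit
weights) yields a tour of the same cost: the 1-weighted TSP cost of the expanded tour
equals the weighted TSP cost of the original tour. -/
theorem stmt14 {α : Type*} [DecidableEq α] (d : α → α → ℝ) (w : α → ℕ)
    (hw : ∀ i, 1 ≤ w i)
    (hnn : ∀ i j, 0 ≤ d i j) (hsym : ∀ i j, d i j = d j i)
    (hself : ∀ i, d i i = 0) (htri : ∀ i j k, d i k ≤ d i j + d j k)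
    (L : List α) (hne : L ≠ []) (hnd : L.Nodup) (a : α) :
    wCostList (fun i j => if i = j then (0 : ℝ) else d i j) (fun _ => (1 : ℝ)) a
        (L.flatMap fun i => List.replicate (w i) i) =
      wCostList d (fun i => (w i : ℝ)) a L := by
  rcases L with _ | ⟨x, t⟩
  · exact absurd rfl hne
  set M := ((x :: t).flatMap fun i => List.replicate (w i) i) with hM
  obtain ⟨mx, hmx⟩ : ∃ m, w x = m + 1 := ⟨w x - 1, (Nat.succ_pred_eq_of_pos (hw x)).symm⟩
  have hMcons : M = x :: (List.replicate mx x ++ (t.flatMap fun i => List.replicate (w i) i)) := by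
    rw [hM, List.flatMap_cons, hmx, List.replicate_succ, List.cons_append]
  have hM0 : M.getD 0 a = x := by rw [hMcons]; rfl
  have hlast : M.getD (M.length - 1) a = (x :: t).getD ((x::t).length - 1) a := by
    rw [List.getD_eq_getElem?_getD, List.getD_eq_getElem?_getD,
      ← List.getLast?_eq_getElem?, ← List.getLast?_eq_getElem?, hM, getLast?_expand w hw]
  have hLlast : (x :: t).getD ((x::t).length - 1) a = (x::t).getLast (by simp) := by
    rw [List.getD_eq_getElem?_getD, ← List.getLast?_eq_getElem?,
      List.getLast?_eq_getLast (l := x :: t) (by simp)]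
    rfl
  have hcyc : (if (x::t).getLast (by simp) = x then (0:ℝ) else d ((x::t).getLast (by simp)) x)
      = d ((x::t).getLast (by simp)) x := by
    rcases t with _ | ⟨y, t'⟩
    · simp [List.getLast, hself]
    · have hmem : (x :: y :: t').getLast (by simp) ∈ y :: t' := by
        rw [List.getLast_cons (by simp)]
        exact List.getLast_mem _
      have hne' : (x :: y :: t').getLast (by simp) ≠ x := by
        intro h; rw [h] at hmem; exact (List.nodup_cons.mp hnd).1 hmem
      rw [if_neg hne']
  have hlen : (M.length : ℝ) = ∑ j ∈ Finset.range (x::t).length, ((w ((x::t).getD j a)) : ℝ) := by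
    rw [sumWt (fun i => (w i : ℝ)) a (x::t), hM, List.length_flatMap]
    have h1 : (List.map (fun a => (List.replicate (w a) a).length) (x::t))
        = (x::t).map w := by
      simp [Function.comp_def]
    rw [h1, Nat.cast_list_sum, List.map_map]
    rfl
  rw [wCostList, wCostList,
    sumIdx0 (fun i j => if i = j then (0:ℝ) else d i j) (fun _ => (1:ℝ)) a M,
    sumIdx0 d (fun i => (w i : ℝ)) a (x :: t), pathS_expand d w hw _ hnd]
  congr 1
  rw [hlast, hM0, hLlast, hcyc, List.getD_cons_zero]
  rw [Finset.sum_const, Finset.card_range, nsmul_eq_mul, mul_one, hlen]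
end

section
/- In the expanded instance with metric d̂, for any permutation σ of the copies, moving all copies of a city i (except the last-visited one, i_x) to immediately follow i_x does not increase the 1-weighted TSP cost. -/
open List Finset

section helpers
variable {α : Type*} (D : α → α → ℝ)

noncomputable def pcost : ℕ → List α → ℝ
  | _, [] => 0
  | _, [_] => 0
  | k, a :: b :: l => k * D a b + pcost (k+1) (b :: l)

lemma pcost_nil (k : ℕ) : pcost D k ([] : List α) = 0 := rfl
lemma pcost_single (k : ℕ) (a : α) : pcost D k [a] = 0 := rfl
lemma pcost_cons2 (k : ℕ) (a b : α) (l : List α) :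
    pcost D k (a :: b :: l) = k * D a b + pcost D (k+1) (b :: l) := rfl

lemma pcost_nonneg (hD : ∀ u v, 0 ≤ D u v) :
    ∀ (L : List α) (k : ℕ), 0 ≤ pcost D k L := by
  intro L
  induction L with
  | nil => intro k; simp [pcost_nil]
  | cons b t ih =>
    intro k
    cases t with
    | nil => simp [pcost_single]
    | cons c l =>
      rw [pcost_cons2]
      have h1 := hD b c
      have h2 := ih (k+1)
      have hk : (0:ℝ) ≤ (k:ℝ) := by positivity
      nlinarith

lemma pcost_mono (hD : ∀ u v, 0 ≤ D u v) :
    ∀ (L : List α) (k k' : ℕ), k ≤ k' → pcost D k L ≤ pcost D k' L := by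
  intro L
  induction L with
  | nil => intro k k' _; simp [pcost_nil]
  | cons b t ih =>
    intro k k' hkk
    cases t with
    | nil => simp [pcost_single]
    | cons c l =>
      rw [pcost_cons2, pcost_cons2]
      have h1 := hD b c
      have h2 := ih (k+1) (k'+1) (by omega)
      have hk : (k:ℝ) ≤ (k':ℝ) := by exact_mod_cast hkk
      nlinarith

lemma pcost_append_cons :
    ∀ (l₁ : List α) (a : α) (l₂ : List α) (k : ℕ),
      pcost D k (l₁ ++ a :: l₂) = pcost D k (l₁ ++ [a]) + pcost D (k + l₁.length) (a :: l₂) := by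
  intro l₁
  induction l₁ with
  | nil => intro a l₂ k; simp [pcost_single]
  | cons b l' ih =>
    intro a l₂ k
    cases l' with
    | nil => simp [pcost_cons2, pcost_single]
    | cons c l'' =>
      have h1 : (b :: c :: l'') ++ a :: l₂ = b :: ((c :: l'') ++ a :: l₂) := by simp
      have h2 : (b :: c :: l'') ++ [a] = b :: ((c :: l'') ++ [a]) := by simp
      rw [h1, h2]
      rw [show (c :: l'') ++ a :: l₂ = c :: (l'' ++ a :: l₂) by simp,
          show (c :: l'') ++ [a] = c :: (l'' ++ [a]) by simp]
      rw [pcost_cons2, pcost_cons2]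
      rw [show c :: (l'' ++ a :: l₂) = (c :: l'') ++ a :: l₂ by simp,
          show c :: (l'' ++ [a]) = (c :: l'') ++ [a] by simp]
      rw [ih a l₂ (k+1)]
      simp [List.length_cons]
      ring_nf


lemma pcost_filter_le (hD : ∀ u v, 0 ≤ D u v)
    (htri : ∀ u v w, D u w ≤ D u v + D v w) (p : α → Bool) :
    ∀ (L : List α) (k : ℕ) (u x : α),
      pcost D k (u :: L.filter p ++ [x]) ≤ pcost D k (u :: L ++ [x]) := by
  intro L
  induction L with
  | nil => intro k u x; simp
  | cons a L' ih =>
    intro k u x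
    by_cases hp : p a
    · rw [List.filter_cons_of_pos hp]
      rw [show (u :: (a :: L'.filter p) ++ [x]) = u :: a :: (L'.filter p ++ [x]) by simp,
          show (u :: (a :: L') ++ [x]) = u :: a :: (L' ++ [x]) by simp,
          pcost_cons2, pcost_cons2]
      have := ih (k+1) a x
      simp only [List.cons_append] at this
      linarith
    · rw [List.filter_cons_of_neg hp]
      have step : pcost D k (u :: L' ++ [x]) ≤ pcost D k (u :: (a :: L') ++ [x]) := by
        cases L' with
        | nil =>
          simp only [List.nil_append, List.cons_append]
          rw [show ([u, x] : List α) = u :: x :: [] from rfl]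
          rw [pcost_cons2, pcost_cons2, pcost_cons2, pcost_single, pcost_single]
          have h1 := htri u a x
          have h2 := hD a x
          have hk : (0:ℝ) ≤ (k:ℝ) := by positivity
          push_cast
          nlinarith
        | cons c L'' =>
          simp only [List.cons_append]
          rw [pcost_cons2, pcost_cons2, pcost_cons2]
          have h1 := htri u a c
          have h2 := hD a c
          have hk : (0:ℝ) ≤ (k:ℝ) := by positivity
          have hm := pcost_mono D hD (c :: (L'' ++ [x])) (k+1) (k+2) (by omega)
          push_cast
          nlinarith
      calc pcost D k (u :: L'.filter p ++ [x]) ≤ pcost D k (u :: L' ++ [x]) := ih k u x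
        _ ≤ _ := step

lemma pcost_const_block :
    ∀ (l : List α) (x : α) (k : ℕ),
      (∀ c ∈ l, D x c = 0) → (∀ c ∈ l, ∀ c' ∈ l, D c c' = 0) →
      pcost D k (x :: l) = 0 := by
  intro l
  induction l with
  | nil => intro x k _ _; simp [pcost_single]
  | cons c l' ih =>
    intro x k h0 hpair
    rw [pcost_cons2, h0 c (by simp),
        ih c (k+1) (fun c' hc' => hpair c (by simp) c' (by simp [hc']))
          (fun a ha b hb => hpair a (by simp [ha]) b (by simp [hb]))]
    ring

lemma pcost_block_append :
    ∀ (l : List α) (x b : α) (k : ℕ),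
      (∀ c ∈ l, D x c = 0) → (∀ c ∈ l, ∀ y, D c y = D x y) →
      pcost D k (x :: l ++ [b]) = ((k : ℝ) + l.length) * D x b := by
  intro l
  induction l with
  | nil => intro x b k _ _; simp [pcost_cons2, pcost_single]
  | cons c l' ih =>
    intro x b k h0 hy
    have hxc : D x c = 0 := h0 c (by simp)
    have hcy : ∀ y, D c y = D x y := hy c (by simp)
    rw [show x :: (c :: l') ++ [b] = x :: c :: (l' ++ [b]) by simp,
        pcost_cons2, hxc,
        show c :: (l' ++ [b]) = c :: l' ++ [b] by simp,
        ih c b (k+1)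
          (fun c' hc' => by rw [hcy c', h0 c' (by simp [hc'])])
          (fun c' hc' y => by rw [hy c' (by simp [hc']) y, hcy y]),
        hcy b]
    simp only [List.length_cons]
    push_cast
    ring

lemma pcost_block (l : List α) (x : α) (B : List α) (k : ℕ)
    (h0 : ∀ c ∈ l, D x c = 0) (hy : ∀ c ∈ l, ∀ y, D c y = D x y) :
    pcost D k (x :: l ++ B) = pcost D (k + l.length) (x :: B) := by
  cases B with
  | nil =>
    simp only [List.append_nil]
    rw [pcost_single, pcost_const_block D l x k h0
      (fun a ha b hb => by rw [hy a ha b, h0 b hb])]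
  | cons b B' =>
    rw [show x :: l ++ b :: B' = (x :: l) ++ b :: B' by simp,
        pcost_append_cons D (x :: l) b B' k,
        show (x :: l) ++ [b] = x :: l ++ [b] by simp,
        pcost_block_append D l x b k h0 hy,
        pcost_cons2]
    push_cast
    simp only [List.length_cons]
    ring_nf

lemma sum_eq_pcost (a : α) :
    ∀ (L : List α) (k : ℕ),
      ∑ i ∈ Finset.range (L.length - 1), ((i : ℝ) + k) * D (L.getD i a) (L.getD (i+1) a)
        = pcost D k L := by
  intro L
  induction L with
  | nil => intro k; simp [pcost_nil]
  | cons b t ih =>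
    intro k
    cases t with
    | nil => simp [pcost_single]
    | cons c l =>
      have hlen : (b :: c :: l).length - 1 = l.length + 1 := by simp
      rw [hlen, Finset.sum_range_succ', pcost_cons2, ← ih (k+1)]
      have hlen2 : (c :: l).length - 1 = l.length := by simp
      rw [hlen2]
      simp only [List.getD_cons_succ, List.getD_cons_zero]
      push_cast
      rw [add_comm]
      congr 1
      · ring
      · apply Finset.sum_congr rfl
        intro j _
        ring

end helpers



/-- 1-weighted TSP cost of a tour given as a list (with default element `a`, unused
since all accessed indices are in range). -/
noncomputable def w1CostList {α : Type*} (d : α → α → ℝ) (a : α) (L : List α) : ℝ :=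
  (L.length : ℝ) * d (L.getD (L.length - 1) a) (L.getD 0 a) +
    ∑ i ∈ Finset.range (L.length - 1),
      ((i : ℝ) + 1) * d (L.getD i a) (L.getD (i + 1) a)

/-- in the expanded instance (copies of cities with the induced
pseudometric, unit weights), given a tour `A ++ x :: B` whose start is not a copy of
city i, where x is the last-visited copy of city i (B contains no copies of i), moving
all other copies of i to immediately follow x does not increase the 1-weighted TSP
cost. -/
theorem stmt15 {α β : Type*} [DecidableEq β] (orig : α → β) (d : β → β → ℝ)
    (hnn : ∀ i j, 0 ≤ d i j) (hsym : ∀ i j, d i j = d j i)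
    (hself : ∀ i, d i i = 0) (htri : ∀ i j k, d i k ≤ d i j + d j k)
    (dh : α → α → ℝ)
    (hdh : ∀ u v, dh u v = if orig u = orig v then 0 else d (orig u) (orig v))
    (i : β) (x : α) (hx : orig x = i)
    (A B : List α)
    (hB : ∀ y ∈ B, orig y ≠ i)
    (hAne : A ≠ []) (hAhead : ∀ z, A.head? = some z → orig z ≠ i) :
    w1CostList dh x
        ((A.filter fun z => orig z ≠ i) ++ x :: ((A.filter fun z => orig z = i) ++ B)) ≤
      w1CostList dh x (A ++ x :: B) := by
  classical
  have dh0 : ∀ u v : α, orig u = orig v → dh u v = 0 := fun u v h => by rw [hdh, if_pos h]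
  have dhnn : ∀ u v : α, 0 ≤ dh u v := by
    intro u v; rw [hdh]; split
    · exact le_refl _
    · exact hnn _ _
  have dhtri : ∀ u v w : α, dh u w ≤ dh u v + dh v w := by
    intro u v w
    rw [hdh, hdh, hdh]
    by_cases h1 : orig u = orig w
    · rw [if_pos h1]
      have a1 : (0:ℝ) ≤ (if orig u = orig v then 0 else d (orig u) (orig v)) := by
        split; exacts [le_refl _, hnn _ _]
      have a2 : (0:ℝ) ≤ (if orig v = orig w then 0 else d (orig v) (orig w)) := by
        split; exacts [le_refl _, hnn _ _]
      linarith
    · rw [if_neg h1]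
      by_cases h2 : orig u = orig v
      · have h3 : ¬ orig v = orig w := fun h => h1 (h2.trans h)
        rw [if_pos h2, if_neg h3, ← h2]
        linarith
      · by_cases h3 : orig v = orig w
        · rw [if_neg h2, if_pos h3, h3]
          linarith [hnn (orig u) (orig w)]
        · rw [if_neg h2, if_neg h3]
          exact htri _ _ _
  obtain ⟨u, T, rfl⟩ : ∃ u T, A = u :: T := by
    cases A with
    | nil => exact absurd rfl hAne
    | cons u T => exact ⟨u, T, rfl⟩
  have hu : orig u ≠ i := hAhead u rfl
  set Af := (u :: T).filter (fun z => orig z ≠ i) with hAfdef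
  set Ai := (u :: T).filter (fun z => orig z = i) with hAidef
  have hAf : Af = u :: T.filter (fun z => orig z ≠ i) := by
    rw [hAfdef, List.filter_cons_of_pos (by simpa using hu)]
  have hAi : ∀ c ∈ Ai, orig c = i := by
    intro c hc
    rw [hAidef] at hc
    simpa using (List.mem_filter.mp hc).2
  have hlenAdd : Af.length + Ai.length = T.length + 1 := by
    rw [hAfdef, hAidef]
    have : ∀ l : List α,
        (l.filter (fun z => orig z ≠ i)).length + (l.filter (fun z => orig z = i)).length
          = l.length := by
      intro l
      induction l with
      | nil => simp
      | cons a t ih =>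
        by_cases h : orig a = i
        · rw [List.filter_cons_of_neg (by simpa using h),
              List.filter_cons_of_pos (by simpa using h)]
          simp only [List.length_cons]
          omega
        · rw [List.filter_cons_of_pos (by simpa using h),
              List.filter_cons_of_neg (by simpa using h)]
          simp only [List.length_cons]
          omega
    simpa using this (u :: T)
  -- sum to pcost
  have hsum : ∀ L : List α,
      ∑ j ∈ Finset.range (L.length - 1), ((j:ℝ)+1) * dh (L.getD j x) (L.getD (j+1) x)
        = pcost dh 1 L := by
    intro L
    have := sum_eq_pcost dh x L 1
    simpa using this
  -- pcost inequality
  have hp : pcost dh 1 (Af ++ x :: (Ai ++ B)) ≤ pcost dh 1 ((u :: T) ++ x :: B) := by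
    rw [pcost_append_cons dh Af x (Ai ++ B) 1, pcost_append_cons dh (u :: T) x B 1]
    have hblock : pcost dh (1 + Af.length) (x :: Ai ++ B)
        = pcost dh (1 + Af.length + Ai.length) (x :: B) := by
      exact pcost_block dh Ai x B (1 + Af.length)
        (fun c hc => dh0 x c (by rw [hx, hAi c hc]))
        (fun c hc y => by rw [hdh, hdh, (hAi c hc).trans hx.symm])
    have hkeq : 1 + Af.length + Ai.length = 1 + (u :: T).length := by
      simp only [List.length_cons]; omega
    rw [show x :: (Ai ++ B) = x :: Ai ++ B from rfl, hblock, hkeq]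
    have hfil : pcost dh 1 (Af ++ [x]) ≤ pcost dh 1 ((u :: T) ++ [x]) := by
      rw [hAf]
      have := pcost_filter_le dh dhnn dhtri (fun z => decide (orig z ≠ i)) T 1 u x
      simpa using this
    linarith
  -- lengths
  have hlen' : (Af ++ x :: (Ai ++ B)).length = ((u :: T) ++ x :: B).length := by
    simp only [List.length_append, List.length_cons]
    omega
  -- heads
  have hhead' : (Af ++ x :: (Ai ++ B)).getD 0 x = u := by
    rw [hAf]; rfl
  have hhead : ((u :: T) ++ x :: B).getD 0 x = u := rfl
  -- closing edge
  have hclose : dh ((Af ++ x :: (Ai ++ B)).getD ((Af ++ x :: (Ai ++ B)).length - 1) x)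
        ((Af ++ x :: (Ai ++ B)).getD 0 x)
      = dh (((u :: T) ++ x :: B).getD (((u :: T) ++ x :: B).length - 1) x)
        (((u :: T) ++ x :: B).getD 0 x) := by
    rw [hhead', hhead]
    have hL : ((u :: T) ++ x :: B).getD (((u :: T) ++ x :: B).length - 1) x
        = (x :: B).getD B.length x := by
      rw [List.getD_append_right (u :: T) (x :: B) x _
        (by simp only [List.length_append, List.length_cons]; omega)]
      congr 1
      simp only [List.length_append, List.length_cons]
      omega
    have hL' : (Af ++ x :: (Ai ++ B)).getD ((Af ++ x :: (Ai ++ B)).length - 1) x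
        = (x :: (Ai ++ B)).getD (Ai.length + B.length) x := by
      rw [List.getD_append_right Af (x :: (Ai ++ B)) x _
        (by simp only [List.length_append, List.length_cons]; omega)]
      congr 1
      simp only [List.length_append, List.length_cons]
      omega
    rw [hL, hL']
    cases B with
    | nil =>
      simp only [List.append_nil, List.length_nil, Nat.add_zero, List.getD_cons_zero]
      have hmem : (x :: Ai).getD Ai.length x ∈ x :: Ai := by
        rw [List.getD_eq_getElem (x :: Ai) x (by simp)]
        exact List.getElem_mem _
      have horigl : orig ((x :: Ai).getD Ai.length x) = i := by
        rcases List.mem_cons.mp hmem with h | h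
        · rw [h]; exact hx
        · exact hAi _ h
      rw [hdh, hdh, horigl, hx]
    | cons b B' =>
      have hidx : Ai.length + (b :: B').length = (Ai.length + B'.length) + 1 := by
        simp only [List.length_cons]; omega
      rw [hidx, List.getD_cons_succ,
          List.getD_append_right Ai (b :: B') x _ (by omega)]
      have : Ai.length + B'.length - Ai.length = B'.length := by omega
      rw [this]
      rfl
  -- final
  unfold w1CostList
  rw [hsum, hsum, hclose, hlen']
  have hnn2 : (0:ℝ) ≤ (((u :: T) ++ x :: B).length : ℝ) := by positivity
  linarith
end

section
/- For c > 1 and 0 < d ≤ 1, with b = c^U for U uniform on [0,1], the expected total length of appended k-MST tours of costs 2bc^ℓ (summed up to ℓ = j−1 if d < b and up to ℓ = j if d ≥ b) is at most 2dc^j / ln c; formally, ∫_{log_c d}^{1} 2c^U c^j/(c−1) dU + ∫_{0}^{log_c d} 2c^U c^{j+1}/(c−1) dU = 2dc^j/ln c. -/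
lemma integ_rpow_base (c : ℝ) (hc : 1 < c) (a b : ℝ) :
    ∫ U in a..b, c ^ U = (c ^ b - c ^ a) / Real.log c := by
  have hc0 : (0:ℝ) < c := lt_trans one_pos hc
  have hlog : Real.log c ≠ 0 := ne_of_gt (Real.log_pos hc)
  have h : ∀ x ∈ Set.uIcc a b, HasDerivAt (fun U : ℝ => c ^ U / Real.log c) (c ^ x) x := by
    intro x _
    have := (Real.hasStrictDerivAt_const_rpow hc0 x).hasDerivAt.div_const (Real.log c)
    simpa [mul_div_assoc, mul_div_cancel_right₀ _ hlog] using this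
  have hint : IntervalIntegrable (fun U : ℝ => c ^ U) MeasureTheory.volume a b :=
    (continuous_const.rpow continuous_id fun _ => Or.inl (ne_of_gt hc0)).intervalIntegrable a b
  have := intervalIntegral.integral_eq_sub_of_hasDerivAt h hint
  simpa [div_sub_div_same] using this

/-- the expectation computation in the randomized 3.59-approximation:
for c > 1 and 1 ≤ d ≤ c (so that log_c d ∈ [0,1]),
∫_{log_c d}^{1} 2c^U·c^j/(c−1) dU + ∫_{0}^{log_c d} 2c^U·c^{j+1}/(c−1) dU = 2d·c^j/ln c. -/
theorem stmt18 (c dv j : ℝ) (hc : 1 < c) (hd1 : 1 ≤ dv) (hdc : dv ≤ c) :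
    (∫ U in Real.logb c dv..(1 : ℝ), 2 * c ^ U * c ^ j / (c - 1)) +
      (∫ U in (0 : ℝ)..Real.logb c dv, 2 * c ^ U * c ^ (j + 1) / (c - 1)) =
    2 * dv * c ^ j / Real.log c := by
  have hc0 : (0:ℝ) < c := lt_trans one_pos hc
  have hlog : (0:ℝ) < Real.log c := Real.log_pos hc
  have hc1 : c - 1 ≠ 0 := sub_ne_zero.mpr (ne_of_gt hc)
  have hrw : c ^ Real.logb c dv = dv :=
    Real.rpow_logb hc0 (ne_of_gt hc) (lt_of_lt_of_le one_pos hd1)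
  have h1 : (∫ U in Real.logb c dv..(1 : ℝ), 2 * c ^ U * c ^ j / (c - 1)) =
      (2 * c ^ j / (c - 1)) * ((c ^ (1:ℝ) - dv) / Real.log c) := by
    have : (fun U : ℝ => 2 * c ^ U * c ^ j / (c - 1)) =
        (fun U : ℝ => (2 * c ^ j / (c - 1)) * c ^ U) := by
      funext U; ring
    rw [this, intervalIntegral.integral_const_mul, integ_rpow_base c hc, hrw]
  have h2 : (∫ U in (0 : ℝ)..Real.logb c dv, 2 * c ^ U * c ^ (j + 1) / (c - 1)) =
      (2 * c ^ (j+1) / (c - 1)) * ((dv - c ^ (0:ℝ)) / Real.log c) := by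
    have : (fun U : ℝ => 2 * c ^ U * c ^ (j+1) / (c - 1)) =
        (fun U : ℝ => (2 * c ^ (j+1) / (c - 1)) * c ^ U) := by
      funext U; ring
    rw [this, intervalIntegral.integral_const_mul, integ_rpow_base c hc, hrw]
  rw [h1, h2, Real.rpow_one, Real.rpow_zero, Real.rpow_add hc0, Real.rpow_one]
  field_simp
  ring
end
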